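/- Given pastures P, P₁, P₂ and morphisms of pastures f₁ : P → P₁ and f₂ : P → P₂, the fibered coproduct P₁ ⊗_P P₂ with the maps i₁ and i₂ satisfies the universal property of the fibered coproduct: if P' is a pasture and g₁ : P₁ → P', g₂ : P₂ → P' are morphisms of pastures with g₁ ∘ f₁ = g₂ ∘ f₂, then there is a unique morphism of pastures g : P₁ ⊗_P P₂ → P' with g ∘ i₁ = g₁ and g ∘ i₂ = g₂; explicitly, g([(a,b)]) = g₁(a)g₂(b). -/
import Mathlib


universe u v w

/-- A pasture structure on a type `P`: a multiplication, a zero, a one,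
an involution `neg`, and a ternary nullset relation `null a b c`
(meaning "`a + b + c = 0`"). -/
structure PastureStr (P : Type u) where
  mul : P → P → P
  zero : P
  one : P
  neg : P → P
  null : P → P → P → Prop

/-- `P` together with a `PastureStr` is a pasture: `P` is a commutative
monoid with zero whose nonzero elements form an abelian group, `neg` is an
involution fixing `0`, and the nullset is invariant under permutations,
invariant under multiplication, and satisfies `a + b + 0 = 0 ↔ a = -b`. -/
structure PastureStr.IsPasture {P : Type u} (S : PastureStr P) : Prop where
  mul_comm : ∀ a b : P, S.mul a b = S.mul b a
  mul_assoc : ∀ a b c : P, S.mul (S.mul a b) c = S.mul a (S.mul b c)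
  one_mul : ∀ a : P, S.mul S.one a = a
  zero_mul : ∀ a : P, S.mul S.zero a = S.zero
  one_ne_zero : S.one ≠ S.zero
  mul_ne_zero : ∀ a b : P, a ≠ S.zero → b ≠ S.zero → S.mul a b ≠ S.zero
  exists_inv : ∀ a : P, a ≠ S.zero → ∃ b : P, S.mul a b = S.one
  neg_neg : ∀ a : P, S.neg (S.neg a) = a
  neg_zero : S.neg S.zero = S.zero
  null_swap_left : ∀ a b c : P, S.null a b c → S.null b a c
  null_swap_right : ∀ a b c : P, S.null a b c → S.null a c b
  null_mul : ∀ d a b c : P, S.null a b c → S.null (S.mul d a) (S.mul d b) (S.mul d c)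
  null_zero : ∀ a b : P, S.null a b S.zero ↔ a = S.neg b

/-- A morphism of pastures: a multiplicative map preserving `0`, `1`,
the involution and the nullset. -/
structure PastureStr.IsHom {P : Type u} {P' : Type v} (S : PastureStr P) (T : PastureStr P')
    (f : P → P') : Prop where
  map_mul : ∀ a b : P, f (S.mul a b) = T.mul (f a) (f b)
  map_zero : f S.zero = T.zero
  map_one : f S.one = T.one
  map_neg : ∀ a : P, f (S.neg a) = T.neg (f a)
  map_null : ∀ a b c : P, S.null a b c → T.null (f a) (f b) (f c)

variable {P P₁ P₂ : Type u}

/-- The equivalence relation defining the fibered coproduct `P₁ ⊗_P P₂`: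
`(a,b) ∼ (c,d)` iff both pairs contain a zero entry, or
`(c,d) = (f₁(x)⁻¹ a, f₂(x) b)` for some `x ∈ P^×` (expressed here as
`f₁(x) · c = a` and `d = f₂(x) · b`). -/
def tensorRel (S : PastureStr P) (S₁ : PastureStr P₁) (S₂ : PastureStr P₂)
    (f₁ : P → P₁) (f₂ : P → P₂) : P₁ × P₂ → P₁ × P₂ → Prop := fun x y =>
  ((x.1 = S₁.zero ∨ x.2 = S₂.zero) ∧ (y.1 = S₁.zero ∨ y.2 = S₂.zero)) ∨
    ∃ z : P, z ≠ S.zero ∧ S₁.mul (f₁ z) y.1 = x.1 ∧ y.2 = S₂.mul (f₂ z) x.2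

/-- The underlying set of the fibered coproduct `P₁ ⊗_P P₂`: the quotient of
the Cartesian product `P₁ × P₂` by the relation `tensorRel`. -/
def TensorCarrier (S : PastureStr P) (S₁ : PastureStr P₁) (S₂ : PastureStr P₂)
    (f₁ : P → P₁) (f₂ : P → P₂) : Type u :=
  Quot (tensorRel S S₁ S₂ f₁ f₂)

/-- The nullset of the fibered coproduct `P₁ ⊗_P P₂`:
`[(a,y)] + [(b,y)] + [(c,y)] = 0` whenever `a + b + c = 0` in `P₁` and
`y ∈ P₂`, and `[(x,a)] + [(x,b)] + [(x,c)] = 0` whenever `a + b + c = 0` in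
`P₂` and `x ∈ P₁`. -/
def tensorNull (S : PastureStr P) (S₁ : PastureStr P₁) (S₂ : PastureStr P₂)
    (f₁ : P → P₁) (f₂ : P → P₂) (u v w : TensorCarrier S S₁ S₂ f₁ f₂) : Prop :=
  (∃ a b c y, S₁.null a b c ∧
      u = Quot.mk (tensorRel S S₁ S₂ f₁ f₂) (a, y) ∧
      v = Quot.mk (tensorRel S S₁ S₂ f₁ f₂) (b, y) ∧
      w = Quot.mk (tensorRel S S₁ S₂ f₁ f₂) (c, y)) ∨
  (∃ x a b c, S₂.null a b c ∧
      u = Quot.mk (tensorRel S S₁ S₂ f₁ f₂) (x, a) ∧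
      v = Quot.mk (tensorRel S S₁ S₂ f₁ f₂) (x, b) ∧
      w = Quot.mk (tensorRel S S₁ S₂ f₁ f₂) (x, c))

/-- A pasture structure `SQ` on the quotient `P₁ ⊗_P P₂` realizes the fibered
coproduct if: its zero is `[(0,0)]`, its one is `[(1,1)]`, its multiplication
is given on classes by componentwise multiplication (in particular this
multiplication of equivalence classes is well-defined), its involution is
given by `-[(a,b)] = [(-a,b)] = [(a,-b)]` (in particular this involution is
well-defined), and its nullset is exactly `tensorNull`. -/
def TensorSpec (S : PastureStr P) (S₁ : PastureStr P₁) (S₂ : PastureStr P₂)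
    (f₁ : P → P₁) (f₂ : P → P₂)
    (SQ : PastureStr (TensorCarrier S S₁ S₂ f₁ f₂)) : Prop :=
  SQ.zero = Quot.mk (tensorRel S S₁ S₂ f₁ f₂) (S₁.zero, S₂.zero) ∧
  SQ.one = Quot.mk (tensorRel S S₁ S₂ f₁ f₂) (S₁.one, S₂.one) ∧
  (∀ (a : P₁) (b : P₂) (c : P₁) (d : P₂),
      SQ.mul (Quot.mk (tensorRel S S₁ S₂ f₁ f₂) (a, b))
          (Quot.mk (tensorRel S S₁ S₂ f₁ f₂) (c, d)) =
        Quot.mk (tensorRel S S₁ S₂ f₁ f₂) (S₁.mul a c, S₂.mul b d)) ∧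
  (∀ (a : P₁) (b : P₂),
      SQ.neg (Quot.mk (tensorRel S S₁ S₂ f₁ f₂) (a, b)) =
        Quot.mk (tensorRel S S₁ S₂ f₁ f₂) (S₁.neg a, b)) ∧
  (∀ (a : P₁) (b : P₂),
      SQ.neg (Quot.mk (tensorRel S S₁ S₂ f₁ f₂) (a, b)) =
        Quot.mk (tensorRel S S₁ S₂ f₁ f₂) (a, S₂.neg b)) ∧
  (∀ u v w, SQ.null u v w ↔ tensorNull S S₁ S₂ f₁ f₂ u v w)

/-- The canonical map `i₁ : P₁ → P₁ ⊗_P P₂`, `x ↦ [(x,1)]`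
(note `[(0,1)] = [(0,0)]`, so `i₁ 0 = 0`). -/
def tensorInc₁ (S : PastureStr P) (S₁ : PastureStr P₁) (S₂ : PastureStr P₂)
    (f₁ : P → P₁) (f₂ : P → P₂) : P₁ → TensorCarrier S S₁ S₂ f₁ f₂ := fun x =>
  Quot.mk (tensorRel S S₁ S₂ f₁ f₂) (x, S₂.one)

/-- The canonical map `i₂ : P₂ → P₁ ⊗_P P₂`, `y ↦ [(1,y)]`
(note `[(1,0)] = [(0,0)]`, so `i₂ 0 = 0`). -/
def tensorInc₂ (S : PastureStr P) (S₁ : PastureStr P₁) (S₂ : PastureStr P₂)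
    (f₁ : P → P₁) (f₂ : P → P₂) : P₂ → TensorCarrier S S₁ S₂ f₁ f₂ := fun y =>
  Quot.mk (tensorRel S S₁ S₂ f₁ f₂) (S₁.one, y)

-- Auxiliary lemmas

lemma pasture_mul_zero {Q : Type*} {T : PastureStr Q} (hT : T.IsPasture) (a : Q) :
    T.mul a T.zero = T.zero := by
  rw [hT.mul_comm]; exact hT.zero_mul a

lemma pasture_mul_one {Q : Type*} {T : PastureStr Q} (hT : T.IsPasture) (a : Q) :
    T.mul a T.one = a := by
  rw [hT.mul_comm]; exact hT.one_mul a

lemma pasture_mul_neg {Q : Type*} {T : PastureStr Q} (hT : T.IsPasture) (d a : Q) :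
    T.mul d (T.neg a) = T.neg (T.mul d a) := by
  have h0 : T.null a (T.neg a) T.zero :=
    (hT.null_zero a (T.neg a)).2 (hT.neg_neg a).symm
  have h1 := hT.null_mul d _ _ _ h0
  rw [pasture_mul_zero hT d] at h1
  have h2 := (hT.null_zero _ _).1 h1
  have h3 := congrArg T.neg h2
  rw [hT.neg_neg] at h3
  exact h3.symm

lemma pasture_neg_mul {Q : Type*} {T : PastureStr Q} (hT : T.IsPasture) (a b : Q) :
    T.mul (T.neg a) b = T.neg (T.mul a b) := by
  rw [hT.mul_comm, pasture_mul_neg hT, hT.mul_comm]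

lemma pasture_mul_mul {Q : Type*} {T : PastureStr Q} (hT : T.IsPasture) (a b c d : Q) :
    T.mul (T.mul a b) (T.mul c d) = T.mul (T.mul a c) (T.mul b d) := by
  rw [hT.mul_assoc, hT.mul_assoc, ← hT.mul_assoc b c d, hT.mul_comm b c,
    hT.mul_assoc c b d]

/-- **The fibered coproduct of pastures satisfies the universal property of
the fibered coproduct**: for any pasture structure realizing `P₁ ⊗_P P₂` and
any pasture `P'` with morphisms `g₁ : P₁ → P'`, `g₂ : P₂ → P'` satisfying
`g₁ ∘ f₁ = g₂ ∘ f₂`, there is a unique morphism `g : P₁ ⊗_P P₂ → P'` with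
`g ∘ i₁ = g₁` and `g ∘ i₂ = g₂`; explicitly, `g [(a,b)] = g₁ a · g₂ b`. -/
theorem fibered_coproduct_universal_property
    (S : PastureStr P) (S₁ : PastureStr P₁) (S₂ : PastureStr P₂)
    (hS : S.IsPasture) (hS₁ : S₁.IsPasture) (hS₂ : S₂.IsPasture)
    (f₁ : P → P₁) (f₂ : P → P₂) (hf₁ : S.IsHom S₁ f₁) (hf₂ : S.IsHom S₂ f₂)
    (SQ : PastureStr (TensorCarrier S S₁ S₂ f₁ f₂))
    (hSQ : TensorSpec S S₁ S₂ f₁ f₂ SQ) (hSQP : SQ.IsPasture)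
    (P' : Type v) (S' : PastureStr P') (hS' : S'.IsPasture)
    (g₁ : P₁ → P') (g₂ : P₂ → P')
    (hg₁ : S₁.IsHom S' g₁) (hg₂ : S₂.IsHom S' g₂)
    (hcomm : g₁ ∘ f₁ = g₂ ∘ f₂) :
    ∃ g : TensorCarrier S S₁ S₂ f₁ f₂ → P',
      (PastureStr.IsHom SQ S' g ∧
        g ∘ tensorInc₁ S S₁ S₂ f₁ f₂ = g₁ ∧ g ∘ tensorInc₂ S S₁ S₂ f₁ f₂ = g₂ ∧
        ∀ (a : P₁) (b : P₂),
          g (Quot.mk (tensorRel S S₁ S₂ f₁ f₂) (a, b)) = S'.mul (g₁ a) (g₂ b)) ∧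
      ∀ g' : TensorCarrier S S₁ S₂ f₁ f₂ → P',
        (PastureStr.IsHom SQ S' g' ∧
          g' ∘ tensorInc₁ S S₁ S₂ f₁ f₂ = g₁ ∧ g' ∘ tensorInc₂ S S₁ S₂ f₁ f₂ = g₂) →
        g' = g := by
  set R := tensorRel S S₁ S₂ f₁ f₂ with hR
  set F : P₁ × P₂ → P' := fun p => S'.mul (g₁ p.1) (g₂ p.2) with hF
  obtain ⟨hzero, hone, hmul, hneg₁, hneg₂, hnull⟩ := hSQ
  have hFzero : ∀ p : P₁ × P₂, (p.1 = S₁.zero ∨ p.2 = S₂.zero) → F p = S'.zero := by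
    rintro p (h | h)
    · simp only [hF, h, hg₁.map_zero]; exact hS'.zero_mul _
    · simp only [hF, h, hg₂.map_zero]; exact pasture_mul_zero hS' _
  have hresp : ∀ x y, R x y → F x = F y := by
    rintro x y (⟨hx, hy⟩ | ⟨z, hz, h1, h2⟩)
    · rw [hFzero x hx, hFzero y hy]
    · have hc : g₁ (f₁ z) = g₂ (f₂ z) := congrFun hcomm z
      simp only [hF, ← h1, h2, hg₁.map_mul, hg₂.map_mul, hc, hS'.mul_assoc]
      rw [← hS'.mul_assoc, hS'.mul_comm (g₂ (f₂ z)) (g₁ y.1), hS'.mul_assoc]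
  refine ⟨Quot.lift F hresp, ⟨⟨?_, ?_, ?_, ?_, ?_⟩, ?_, ?_, fun a b => rfl⟩, ?_⟩
  · -- map_mul
    intro u v
    induction u using Quot.ind with | _ p =>
    induction v using Quot.ind with | _ q =>
    rw [hmul p.1 p.2 q.1 q.2]
    show S'.mul (g₁ (S₁.mul p.1 q.1)) (g₂ (S₂.mul p.2 q.2)) = _
    rw [hg₁.map_mul, hg₂.map_mul]
    exact pasture_mul_mul hS' _ _ _ _
  · -- map_zero
    rw [hzero]
    show S'.mul (g₁ S₁.zero) (g₂ S₂.zero) = _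
    rw [hg₁.map_zero]; exact hS'.zero_mul _
  · -- map_one
    rw [hone]
    show S'.mul (g₁ S₁.one) (g₂ S₂.one) = _
    rw [hg₁.map_one, hg₂.map_one]; exact hS'.one_mul _
  · -- map_neg
    intro u
    induction u using Quot.ind with | _ p =>
    rw [hneg₁ p.1 p.2]
    show S'.mul (g₁ (S₁.neg p.1)) (g₂ p.2) = _
    rw [hg₁.map_neg]
    exact pasture_neg_mul hS' _ _
  · -- map_null
    intro u v w h
    rw [hnull] at h
    rcases h with ⟨a, b, c, y, hn, hu, hv, hw⟩ | ⟨x, a, b, c, hn, hu, hv, hw⟩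
    · subst hu; subst hv; subst hw
      have := hg₁.map_null a b c hn
      have h2 := hS'.null_mul (g₂ y) _ _ _ this
      show S'.null (S'.mul (g₁ a) (g₂ y)) (S'.mul (g₁ b) (g₂ y)) (S'.mul (g₁ c) (g₂ y))
      rw [hS'.mul_comm (g₁ a), hS'.mul_comm (g₁ b), hS'.mul_comm (g₁ c)]
      exact h2
    · subst hu; subst hv; subst hw
      have := hg₂.map_null a b c hn
      exact hS'.null_mul (g₁ x) _ _ _ this
  · -- g ∘ i₁ = g₁
    funext x
    show S'.mul (g₁ x) (g₂ S₂.one) = g₁ x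
    rw [hg₂.map_one]; exact pasture_mul_one hS' _
  · -- g ∘ i₂ = g₂
    funext y
    show S'.mul (g₁ S₁.one) (g₂ y) = g₂ y
    rw [hg₁.map_one]; exact hS'.one_mul _
  · -- uniqueness
    rintro g' ⟨hg', h1, h2⟩
    funext u
    induction u using Quot.ind with | _ p =>
    obtain ⟨a, b⟩ := p
    have hdecomp : Quot.mk R (a, b) =
        SQ.mul (tensorInc₁ S S₁ S₂ f₁ f₂ a) (tensorInc₂ S S₁ S₂ f₁ f₂ b) := by
      rw [show tensorInc₁ S S₁ S₂ f₁ f₂ a = Quot.mk R (a, S₂.one) from rfl,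
        show tensorInc₂ S S₁ S₂ f₁ f₂ b = Quot.mk R (S₁.one, b) from rfl,
        hmul, pasture_mul_one hS₁, hS₂.one_mul]
    have e1 := congrFun h1 a
    have e2 := congrFun h2 b
    simp only [Function.comp_apply] at e1 e2
    have key : g' (Quot.mk R (a, b)) = S'.mul (g₁ a) (g₂ b) := by
      rw [hdecomp, hg'.map_mul, e1, e2]
    exact key
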